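/- There exists a constant c > 0 such that for every integer n ≥ 1 and every integer p ≥ 1, T(n,p) ≤ c·C(p)·n^{−5/2}·(12√3)^n. -/

import Mathlib

open Finset Real Nat

/-- The number of rooted type I triangulations of the p-gon with n inner vertices:
T(n,p) = 4^{n−1}·p·(2p)!·(2p+3n−5)!! / ((p!)²·n!·(2p+n−1)!!). -/
noncomputable def Tfun (n p : ℕ) : ℝ :=
  4 ^ (n - 1) * p * (Nat.factorial (2 * p) : ℝ) *
      (Nat.doubleFactorial (2 * p + 3 * n - 5) : ℝ) /
    (((Nat.factorial p : ℝ)) ^ 2 * (Nat.factorial n : ℝ) *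
      (Nat.doubleFactorial (2 * p + n - 1) : ℝ))

/-- The constant C(p) = 3^{p−2}·p·(2p)! / (4·√(2π)·(p!)²). -/
noncomputable def Cfun (p : ℕ) : ℝ :=
  (3 : ℝ) ^ ((p : ℤ) - 2) * p * (Nat.factorial (2 * p) : ℝ) /
    (4 * Real.sqrt (2 * Real.pi) * ((Nat.factorial p : ℝ)) ^ 2)


def gprod (a t : ℕ) : ℕ := ∏ j ∈ Finset.range t, (a + 2*j + 2)

lemma gprod_pos (a t : ℕ) : 0 < gprod a t :=
  Finset.prod_pos (fun j _ => by omega)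

lemma gprod_succ (a t : ℕ) : gprod a (t+1) = gprod a t * (a + 2*t + 2) := by
  simp [gprod, Finset.prod_range_succ]

lemma dfac_add (a t : ℕ) : (a + 2*t)‼ = a‼ * gprod a t := by
  induction t with
  | zero => simp [gprod]
  | succ t ih =>
      have : a + 2*(t+1) = (a + 2*t) + 2 := by ring
      rw [this, Nat.doubleFactorial_add_two, ih, gprod_succ]; ring

lemma gprod_shift (a t : ℕ) : gprod a (t+1) = (a+2) * gprod (a+2) t := by
  unfold gprod
  rw [Finset.prod_range_succ']
  rw [Finset.prod_congr rfl (fun j (_ : j ∈ Finset.range t) => show a + 2*(j+1) + 2 = (a+2) + 2*j + 2 from by ring)]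
  rw [mul_comm]

lemma gprod_step (a t : ℕ) (h : t ≤ a + 2) : gprod (a+2) t ≤ 3 * gprod a t := by
  have h1 : gprod (a+2) t * (a+2) = gprod a t * (a + 2*t + 2) := by
    rw [mul_comm, ← gprod_shift, gprod_succ]
  have h2 : gprod a t * (a + 2*t + 2) ≤ (3 * gprod a t) * (a + 2) := by
    have : a + 2*t + 2 ≤ 3 * (a+2) := by omega
    calc gprod a t * (a + 2*t + 2) ≤ gprod a t * (3*(a+2)) :=
          Nat.mul_le_mul_left _ this
      _ = (3 * gprod a t) * (a+2) := by ring
  have := gprod_pos a t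
  exact Nat.le_of_mul_le_mul_right (h1 ▸ h2) (by omega)

lemma gprod_iter (b t : ℕ) (ht : t ≤ b + 2) : ∀ k, gprod (b + 2*k) t ≤ 3^k * gprod b t := by
  intro k
  induction k with
  | zero => simp
  | succ k ih =>
      have h1 : b + 2*(k+1) = (b + 2*k) + 2 := by ring
      rw [h1]
      calc gprod ((b+2*k)+2) t ≤ 3 * gprod (b+2*k) t := gprod_step _ _ (by omega)
        _ ≤ 3 * (3^k * gprod b t) := Nat.mul_le_mul_left _ ih
        _ = 3^(k+1) * gprod b t := by ring

lemma gsq (a t : ℕ) :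
    gprod a t * (∏ j ∈ Finset.range t, (a + 2*j + 3)) * (a+1)! = (a + 2*t + 1)! := by
  induction t with
  | zero => simp [gprod]
  | succ t ih =>
      rw [gprod_succ, Finset.prod_range_succ]
      have h2 : (a + 2*(t+1) + 1)! = (a+2*t+3) * ((a+2*t+2) * (a+2*t+1)!) := by
        rw [show a+2*(t+1)+1 = (a+2*t+2)+1 from by ring, Nat.factorial_succ,
          show a+2*t+2 = (a+2*t+1)+1 from by ring, Nat.factorial_succ]
      rw [h2, ← ih]
      ring

lemma gprod_sq_le (a t : ℕ) : gprod a t ^ 2 * (a+1)! ≤ (a + 2*t + 1)! := by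
  rw [← gsq a t]
  have : gprod a t ≤ ∏ j ∈ Finset.range t, (a + 2*j + 3) := by
    apply Finset.prod_le_prod' <;> intros <;> omega
  calc gprod a t ^2 * (a+1)! = gprod a t * gprod a t * (a+1)! := by ring
    _ ≤ gprod a t * (∏ j ∈ Finset.range t, (a + 2*j + 3)) * (a+1)! := by
        exact Nat.mul_le_mul_right _ (Nat.mul_le_mul_left _ this)

lemma stirling_ge (n : ℕ) (hn : 1 ≤ n) : √π ≤ Stirling.stirlingSeq n := by
  obtain ⟨k, rfl⟩ := Nat.exists_eq_add_of_le hn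
  have h := Stirling.stirlingSeq'_antitone.le_of_tendsto
    ((Stirling.tendsto_stirlingSeq_sqrt_pi).comp (Filter.tendsto_add_atTop_nat 1)) k
  simpa [Function.comp, Nat.add_comm] using h

lemma stirling_le' (n : ℕ) (hn : 1 ≤ n) : Stirling.stirlingSeq n ≤ exp 1 / √2 := by
  obtain ⟨k, rfl⟩ := Nat.exists_eq_add_of_le hn
  have h := Stirling.stirlingSeq'_antitone (Nat.zero_le k)
  simpa [Function.comp, Nat.add_comm, Stirling.stirlingSeq_one] using h

lemma fact_lower (n : ℕ) (hn : 1 ≤ n) :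
    √π * (√(2*n) * ((n:ℝ) / exp 1) ^ n) ≤ (n ! : ℝ) := by
  have hd : 0 < √(2*(n:ℝ)) * ((n:ℝ) / exp 1) ^ n := by
    have : (0:ℝ) < n := by exact_mod_cast hn
    positivity
  have h := stirling_ge n hn
  rw [Stirling.stirlingSeq, le_div_iff₀ hd] at h
  linarith

lemma fact_upper (n : ℕ) (hn : 1 ≤ n) :
    (n ! : ℝ) ≤ exp 1 * (√(2*n) * ((n:ℝ) / exp 1) ^ n) := by
  have hd : 0 < √(2*(n:ℝ)) * ((n:ℝ) / exp 1) ^ n := by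
    have : (0:ℝ) < n := by exact_mod_cast hn
    positivity
  have h := stirling_le' n hn
  rw [Stirling.stirlingSeq, div_le_iff₀ hd] at h
  have h2 : exp 1 / √2 ≤ exp 1 := by
    rw [div_le_iff₀ (by positivity : (0:ℝ) < √2)]
    nlinarith [Real.exp_pos 1, Real.one_le_sqrt.mpr (by norm_num : (1:ℝ) ≤ 2) ]
  nlinarith [Real.exp_pos 1]


set_option maxHeartbeats 1600000 in
/-- There is a constant c > 0, uniform in p, with
T(n,p) ≤ c·C(p)·n^{−5/2}·(12√3)^n for all n, p ≥ 1. -/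
theorem T_upper_bound :
    ∃ c : ℝ, 0 < c ∧ ∀ n p : ℕ, 1 ≤ n → 1 ≤ p →
      Tfun n p ≤ c * Cfun p * (n : ℝ) ^ (-(5 / 2) : ℝ) * (12 * Real.sqrt 3) ^ n := by
  refine ⟨100, by norm_num, ?_⟩
  intro n p hn hp
  obtain ⟨q, rfl⟩ : ∃ q, p = q + 1 := ⟨p - 1, by omega⟩
  rcases Nat.lt_or_ge n 2 with h2 | h2
  · obtain rfl : n = 1 := by omega
    have hz3 : (3 : ℝ) ^ (((q+1:ℕ) : ℤ) - 2) = 3^q/3 := by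
      rw [show ((q+1:ℕ) : ℤ) - 2 = (q:ℤ) - 1 from by push_cast; ring,
        zpow_sub₀ (by norm_num : (3:ℝ) ≠ 0), zpow_natCast, zpow_one]
    have h1r : ((1:ℕ):ℝ) ^ (-(5 / 2) : ℝ) = 1 := by
      rw [Nat.cast_one, Real.one_rpow]
    have hT1 : Tfun 1 (q+1) = ((2*(q+1))! : ℝ)/(2*(((q+1)! : ℝ))^2) := by
      simp only [Tfun]
      rw [show 2*(q+1)+3*1-5 = 2*q from by omega, show 2*(q+1)+1-1 = 2*q+2 from by omega,
        Nat.doubleFactorial_add_two]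
      have hD : ((2*q)‼ : ℝ) ≠ 0 := by positivity
      have hF : (((q+1)! : ℝ)) ≠ 0 := by positivity
      push_cast [Nat.factorial_one]
      field_simp
    rw [hT1, h1r]
    have hC : 100 * Cfun (q+1) * 1 * (12 * √3) ^ 1 =
        (100*(3^q/3)*((q:ℝ)+1)*(12*√3)/(4*√(2*π))) * (((2*(q+1))! : ℝ)/(((q+1)! : ℝ))^2) := by
      simp only [Cfun]
      rw [hz3]
      push_cast
      ring
    rw [hC, show ((2*(q+1))! : ℝ)/(2*(((q+1)! : ℝ))^2)
        = (1/2) * (((2*(q+1))! : ℝ)/(((q+1)! : ℝ))^2) from by ring]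
    apply mul_le_mul_of_nonneg_right _ (by positivity)
    rw [le_div_iff₀ (by positivity)]
    have h3q : (1:ℝ) ≤ 3^q := one_le_pow₀ (by norm_num)
    have hs3one : (1:ℝ) ≤ √3 := Real.one_le_sqrt.mpr (by norm_num)
    have hqnn : (0:ℝ) ≤ (q:ℝ) := Nat.cast_nonneg q
    have hs2π : √(2*π) ≤ 3 := by
      have h9 : (2*π) ≤ 9 := by nlinarith [Real.pi_lt_d2]
      calc √(2*π) ≤ √9 := Real.sqrt_le_sqrt h9
        _ = 3 := by rw [show (9:ℝ) = 3^2 from by norm_num, Real.sqrt_sq (by norm_num : (0:ℝ) ≤ 3)]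
    have h1 : (1:ℝ) ≤ 3^q*((q:ℝ)+1) := by nlinarith
    have h2 : (1:ℝ) ≤ 3^q*((q:ℝ)+1)*√3 := by nlinarith
    nlinarith
  · obtain ⟨m, rfl⟩ : ∃ m, n = m + 2 := ⟨n - 2, by omega⟩
    have G2 : 4^(m+2) * √(2*π) * (gprod (m+3) m : ℝ) ≤
        (100/3) * (((m+2:ℕ)):ℝ) ^ (-(5 / 2) : ℝ) * (12*√3)^(m+2) * ((m+2)! : ℝ) := by
      have hMnn : (0:ℝ) ≤ (m:ℝ) := Nat.cast_nonneg m
      have hNcast : ((m+2:ℕ):ℝ) = (m:ℝ)+2 := by push_cast; ring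
      have hEpos : (0:ℝ) < Real.exp 1 := Real.exp_pos 1
      have hE3 : Real.exp 1 ≤ 3 := by nlinarith [Real.exp_one_lt_d9]
      have hsπ : (1:ℝ) ≤ √π := Real.one_le_sqrt.mpr (by nlinarith [Real.pi_gt_three])
      have hπpos := Real.pi_pos
      have hFNpos : (0:ℝ) < ((m+2)! : ℝ) := by exact_mod_cast (m+2).factorial_pos
      have hRpos : (0:ℝ) < (((m+2:ℕ)):ℝ) ^ (-(5 / 2) : ℝ) :=
        Real.rpow_pos_of_pos (by rw [hNcast]; positivity) _
      -- Stirling bounds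
      have hlo : √π * (√(2*((m:ℝ)+2)) * ((((m:ℝ)+2))/Real.exp 1)^(m+2)) ≤ ((m+2)! : ℝ) := by
        have h := fact_lower (m+2) (by omega)
        rwa [hNcast] at h
      have hup : ((3*m+6)! : ℝ) ≤
          Real.exp 1 * (√(2*(3*((m:ℝ)+2))) * ((3*((m:ℝ)+2))/Real.exp 1)^(3*m+6)) := by
        have h := fact_upper (3*m+6) (by omega)
        have hc : ((3*m+6:ℕ):ℝ) = 3*((m:ℝ)+2) := by push_cast; ring
        rwa [hc] at h
      have hpow : ((3*((m:ℝ)+2))/Real.exp 1)^(3*m+6)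
          = 27^(m+2) * (((((m:ℝ)+2))/Real.exp 1)^(m+2))^3 := by
        rw [show (3*m+6) = 3*(m+2) from by ring,
          show 3*((m:ℝ)+2)/Real.exp 1 = 3*(((m:ℝ)+2)/Real.exp 1) from by ring,
          mul_pow, pow_mul, mul_comm 3 (m+2), pow_mul]
        norm_num
      have hsb : √(2*(3*((m:ℝ)+2))) ≤ 2*√(2*((m:ℝ)+2)) := by
        have h1 : 2*(3*((m:ℝ)+2)) ≤ 4*(2*((m:ℝ)+2)) := by nlinarith
        calc √(2*(3*((m:ℝ)+2))) ≤ √(4*(2*((m:ℝ)+2))) := Real.sqrt_le_sqrt h1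
          _ = 2*√(2*((m:ℝ)+2)) := by
              rw [show (4:ℝ)*(2*((m:ℝ)+2)) = 2^2*(2*((m:ℝ)+2)) from by ring,
                Real.sqrt_mul (by norm_num), Real.sqrt_sq (by norm_num : (0:ℝ) ≤ 2)]
      -- rpow facts
      have hR2 : ((((m+2:ℕ)):ℝ) ^ (-(5 / 2) : ℝ))^2 = (((m+2:ℕ)):ℝ) ^ (-(5:ℝ)) := by
        rw [← Real.rpow_natCast ((((m+2:ℕ)):ℝ) ^ (-(5 / 2) : ℝ)) 2,
          ← Real.rpow_mul (by rw [hNcast]; positivity)]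
        norm_num
      have hRN : ((m:ℝ)+2)^5 * ((((m+2:ℕ)):ℝ) ^ (-(5 / 2) : ℝ))^2 = 1 := by
        rw [hR2, ← hNcast, ← Real.rpow_natCast (((m+2:ℕ):ℝ)) 5,
          ← Real.rpow_add (by rw [hNcast]; positivity)]
        norm_num
      -- natural-number facts, cast
      have hGF : ((gprod (m+3) m : ℕ):ℝ)^2 * ((m+4)! : ℝ) ≤ ((3*m+4)! : ℝ) := by
        have h := gprod_sq_le (m+3) m
        rw [show m+3+1 = m+4 from by omega, show m+3+2*m+1 = 3*m+4 from by omega] at h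
        exact_mod_cast h
      have hF36 : ((3*m+6)! : ℝ) = ((3*m+4)! : ℝ) * ((3*(m:ℝ)+5)*(3*(m:ℝ)+6)) := by
        have h : (3*m+6)! = (3*m+4)! * ((3*m+5)*(3*m+6)) := by
          rw [show 3*m+6 = (3*m+5)+1 from by omega, Nat.factorial_succ,
            show 3*m+5 = (3*m+4)+1 from by omega, Nat.factorial_succ]
          ring
        rw [h]; push_cast; ring
      have hF4 : ((m+4)! : ℝ) = (((m:ℝ)+3)*((m:ℝ)+4)) * ((m+2)! : ℝ) := by
        have h : (m+4)! = ((m+3)*(m+4)) * (m+2)! := by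
          rw [show m+4 = (m+3)+1 from by omega, Nat.factorial_succ,
            show m+3 = (m+2)+1 from by omega, Nat.factorial_succ]
          ring
        rw [h]; push_cast; ring
      -- upper piece
      have hL : 16^(m+2)*(2*π)*((3*m+6)! : ℝ) ≤
          432^(m+2)*(12*(π*(√(2*((m:ℝ)+2))*((((m:ℝ)+2)/Real.exp 1)^(m+2))^3))) := by
        have h1 : ((3*m+6)! : ℝ) ≤
            3*((2*√(2*((m:ℝ)+2)))*(27^(m+2)*((((m:ℝ)+2)/Real.exp 1)^(m+2))^3)) := by
          calc ((3*m+6)! : ℝ) ≤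
              Real.exp 1 * (√(2*(3*((m:ℝ)+2))) * ((3*((m:ℝ)+2))/Real.exp 1)^(3*m+6)) := hup
            _ = Real.exp 1 * (√(2*(3*((m:ℝ)+2))) *
                (27^(m+2)*((((m:ℝ)+2)/Real.exp 1)^(m+2))^3)) := by rw [hpow]
            _ ≤ 3*((2*√(2*((m:ℝ)+2)))*(27^(m+2)*((((m:ℝ)+2)/Real.exp 1)^(m+2))^3)) := by
                gcongr
        calc 16^(m+2)*(2*π)*((3*m+6)!:ℝ)
            ≤ 16^(m+2)*(2*π)*(3*((2*√(2*((m:ℝ)+2)))*(27^(m+2)*((((m:ℝ)+2)/Real.exp 1)^(m+2))^3))) := by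
              exact mul_le_mul_of_nonneg_left h1 (by positivity)
          _ = 432^(m+2)*(12*(π*(√(2*((m:ℝ)+2))*((((m:ℝ)+2)/Real.exp 1)^(m+2))^3))) := by
              rw [show (432:ℝ)^(m+2) = 16^(m+2)*27^(m+2) from by rw [← mul_pow]; norm_num]
              ring
      -- scalar inequality
      have hscal : (12:ℝ)*((m:ℝ)+2)^5 ≤
          (10000/9)*((((m:ℝ)+3)*((m:ℝ)+4))*((3*(m:ℝ)+5)*(3*(m:ℝ)+6)))*(√π*(2*((m:ℝ)+2))) := by
        have hpoly : (12:ℝ)*((m:ℝ)+2)^5 ≤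
            (10000/9)*((((m:ℝ)+3)*((m:ℝ)+4))*((3*(m:ℝ)+5)*(3*(m:ℝ)+6)))*(1*(2*((m:ℝ)+2))) := by
          nlinarith [pow_nonneg hMnn 5, pow_nonneg hMnn 4, pow_nonneg hMnn 3, sq_nonneg (m:ℝ), hMnn]
        have h2 : (10000/9)*((((m:ℝ)+3)*((m:ℝ)+4))*((3*(m:ℝ)+5)*(3*(m:ℝ)+6)))*(1*(2*((m:ℝ)+2))) ≤
            (10000/9)*((((m:ℝ)+3)*((m:ℝ)+4))*((3*(m:ℝ)+5)*(3*(m:ℝ)+6)))*(√π*(2*((m:ℝ)+2))) := by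
          gcongr
        linarith
      -- scalar inequality with R²
      have hscal2 : (12:ℝ)*(π*(√(2*((m:ℝ)+2))*((((m:ℝ)+2)/Real.exp 1)^(m+2))^3)) ≤
          ((10000/9)*((((m+2:ℕ)):ℝ) ^ (-(5 / 2) : ℝ))^2*((((m:ℝ)+3)*((m:ℝ)+4))*((3*(m:ℝ)+5)*(3*(m:ℝ)+6))))*
            (π*√π*((2*((m:ℝ)+2))*(√(2*((m:ℝ)+2))*((((m:ℝ)+2)/Real.exp 1)^(m+2))^3))) := by
        have hs2 : (12:ℝ) ≤ (10000/9)*((((m+2:ℕ)):ℝ) ^ (-(5 / 2) : ℝ))^2*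
            ((((m:ℝ)+3)*((m:ℝ)+4))*((3*(m:ℝ)+5)*(3*(m:ℝ)+6)))*(√π*(2*((m:ℝ)+2))) := by
          calc (12:ℝ) = (((((m+2:ℕ)):ℝ) ^ (-(5 / 2) : ℝ))^2)*((12:ℝ)*((m:ℝ)+2)^5) := by
                rw [show (((((m+2:ℕ)):ℝ) ^ (-(5 / 2) : ℝ))^2)*((12:ℝ)*((m:ℝ)+2)^5)
                  = 12*(((m:ℝ)+2)^5 * ((((m+2:ℕ)):ℝ) ^ (-(5 / 2) : ℝ))^2) from by ring, hRN, mul_one]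
            _ ≤ (((((m+2:ℕ)):ℝ) ^ (-(5 / 2) : ℝ))^2)*
                ((10000/9)*((((m:ℝ)+3)*((m:ℝ)+4))*((3*(m:ℝ)+5)*(3*(m:ℝ)+6)))*(√π*(2*((m:ℝ)+2)))) :=
                mul_le_mul_of_nonneg_left hscal (by positivity)
            _ = (10000/9)*((((m+2:ℕ)):ℝ) ^ (-(5 / 2) : ℝ))^2*
                ((((m:ℝ)+3)*((m:ℝ)+4))*((3*(m:ℝ)+5)*(3*(m:ℝ)+6)))*(√π*(2*((m:ℝ)+2))) := by ring
        have hmul := mul_le_mul_of_nonneg_right hs2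
          (show (0:ℝ) ≤ π*(√(2*((m:ℝ)+2))*((((m:ℝ)+2)/Real.exp 1)^(m+2))^3) from by positivity)
        calc (12:ℝ)*(π*(√(2*((m:ℝ)+2))*((((m:ℝ)+2)/Real.exp 1)^(m+2))^3)) ≤ _ := hmul
          _ = _ := by ring
      -- cube of lower bound
      have hcube : (√π*(√(2*((m:ℝ)+2)) * ((((m:ℝ)+2))/Real.exp 1)^(m+2)))^3 ≤ ((m+2)! : ℝ)^3 :=
        pow_le_pow_left₀ (by positivity) hlo 3
      have hLB3 : (√π*(√(2*((m:ℝ)+2)) * ((((m:ℝ)+2))/Real.exp 1)^(m+2)))^3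
          = π*√π*((2*((m:ℝ)+2))*(√(2*((m:ℝ)+2))*((((m:ℝ)+2)/Real.exp 1)^(m+2))^3)) := by
        have h1 : (√π)^2 = π := Real.sq_sqrt Real.pi_pos.le
        have h2 : (√(2*((m:ℝ)+2)))^2 = 2*((m:ℝ)+2) := Real.sq_sqrt (by positivity)
        calc (√π*(√(2*((m:ℝ)+2)) * ((((m:ℝ)+2))/Real.exp 1)^(m+2)))^3
            = ((√π)^2*√π)*(((√(2*((m:ℝ)+2)))^2*√(2*((m:ℝ)+2)))*((((m:ℝ)+2)/Real.exp 1)^(m+2))^3) := by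
              ring
          _ = _ := by rw [h1, h2]; ring
      -- T2
      have hT2 : 16^(m+2)*(2*π)*((3*m+6)! : ℝ) ≤
          (((10000/9)*((((m+2:ℕ)):ℝ) ^ (-(5 / 2) : ℝ))^2*432^(m+2)*((m+2)! : ℝ)^2)*((m+4)! : ℝ))*
            ((3*(m:ℝ)+5)*(3*(m:ℝ)+6)) := by
        calc 16^(m+2)*(2*π)*((3*m+6)! : ℝ)
            ≤ 432^(m+2)*(12*(π*(√(2*((m:ℝ)+2))*((((m:ℝ)+2)/Real.exp 1)^(m+2))^3))) := hL
          _ ≤ 432^(m+2)*(((10000/9)*((((m+2:ℕ)):ℝ) ^ (-(5 / 2) : ℝ))^2*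
                ((((m:ℝ)+3)*((m:ℝ)+4))*((3*(m:ℝ)+5)*(3*(m:ℝ)+6))))*
                (π*√π*((2*((m:ℝ)+2))*(√(2*((m:ℝ)+2))*((((m:ℝ)+2)/Real.exp 1)^(m+2))^3)))) :=
              mul_le_mul_of_nonneg_left hscal2 (by positivity)
          _ = ((10000/9)*((((m+2:ℕ)):ℝ) ^ (-(5 / 2) : ℝ))^2*432^(m+2)*
                ((((m:ℝ)+3)*((m:ℝ)+4))*((3*(m:ℝ)+5)*(3*(m:ℝ)+6))))*
                ((√π*(√(2*((m:ℝ)+2)) * ((((m:ℝ)+2))/Real.exp 1)^(m+2)))^3) := by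
              rw [hLB3]; ring
          _ ≤ ((10000/9)*((((m+2:ℕ)):ℝ) ^ (-(5 / 2) : ℝ))^2*432^(m+2)*
                ((((m:ℝ)+3)*((m:ℝ)+4))*((3*(m:ℝ)+5)*(3*(m:ℝ)+6))))*(((m+2)! : ℝ)^3) :=
              mul_le_mul_of_nonneg_left hcube (by positivity)
          _ = _ := by rw [hF4]; ring
      -- T1 : cancel (3m+5)(3m+6)
      have hT1 : 16^(m+2)*(2*π)*((3*m+4)! : ℝ) ≤
          ((10000/9)*((((m+2:ℕ)):ℝ) ^ (-(5 / 2) : ℝ))^2*432^(m+2)*((m+2)! : ℝ)^2)*((m+4)! : ℝ) := by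
        have hP : (0:ℝ) < (3*(m:ℝ)+5)*(3*(m:ℝ)+6) := by positivity
        have h := hT2
        rw [hF36] at h
        have h' : (16^(m+2)*(2*π)*((3*m+4)! : ℝ))*((3*(m:ℝ)+5)*(3*(m:ℝ)+6)) ≤
            ((((10000:ℝ)/9)*((((m+2:ℕ)):ℝ) ^ (-(5 / 2) : ℝ))^2*432^(m+2)*((m+2)! : ℝ)^2)*((m+4)! : ℝ))*
            ((3*(m:ℝ)+5)*(3*(m:ℝ)+6)) := by calc _ = 16^(m+2)*(2*π)*(((3*m+4)! : ℝ)*((3*(m:ℝ)+5)*(3*(m:ℝ)+6))) := by ring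
          _ ≤ _ := h
        exact le_of_mul_le_mul_right h' hP
      -- squared G2
      have hsq : (4^(m+2) * √(2*π) * (gprod (m+3) m : ℝ))^2 ≤
          ((100/3) * (((m+2:ℕ)):ℝ) ^ (-(5 / 2) : ℝ) * (12*√3)^(m+2) * ((m+2)! : ℝ))^2 := by
        have hF4pos : (0:ℝ) < ((m+4)! : ℝ) := by exact_mod_cast (m+4).factorial_pos
        have h2π : (√(2*π))^2 = 2*π := Real.sq_sqrt (by positivity)
        have h16 : ((4:ℝ)^(m+2))^2 = 16^(m+2) := by
          rw [← pow_mul, mul_comm (m+2) 2, pow_mul]; norm_num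
        have hw2 : (((12:ℝ)*√3)^(m+2))^2 = 432^(m+2) := by
          rw [← pow_mul, mul_comm (m+2) 2, pow_mul,
            show ((12:ℝ)*√3)^2 = 432 from by
              rw [mul_pow, Real.sq_sqrt (by norm_num : (0:ℝ) ≤ 3)]; norm_num]
        have key : ((4^(m+2) * √(2*π) * (gprod (m+3) m : ℝ))^2)*((m+4)! : ℝ) ≤
            (((100/3) * (((m+2:ℕ)):ℝ) ^ (-(5 / 2) : ℝ) * (12*√3)^(m+2) * ((m+2)! : ℝ))^2)*((m+4)! : ℝ) := by
          calc ((4^(m+2) * √(2*π) * (gprod (m+3) m : ℝ))^2)*((m+4)! : ℝ)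
              = ((√(2*π))^2*(((4:ℝ)^(m+2))^2))*(((gprod (m+3) m : ℕ):ℝ)^2*((m+4)! : ℝ)) := by
                ring
            _ = (2*π*((16:ℝ)^(m+2)))*(((gprod (m+3) m : ℕ):ℝ)^2*((m+4)! : ℝ)) := by rw [h2π, h16]
            _ ≤ (2*π*((16:ℝ)^(m+2)))*((3*m+4)! : ℝ) := mul_le_mul_of_nonneg_left hGF (by positivity)
            _ = 16^(m+2)*(2*π)*((3*m+4)! : ℝ) := by ring
            _ ≤ ((10000/9)*((((m+2:ℕ)):ℝ) ^ (-(5 / 2) : ℝ))^2*432^(m+2)*((m+2)! : ℝ)^2)*((m+4)! : ℝ) := hT1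
            _ = _ := by rw [← hw2]; ring
        exact le_of_mul_le_mul_right key hF4pos
      -- conclude G2
      have hAnn : (0:ℝ) ≤ 4^(m+2) * √(2*π) * (gprod (m+3) m : ℝ) := by positivity
      have hBnn : (0:ℝ) ≤ (100/3) * (((m+2:ℕ)):ℝ) ^ (-(5 / 2) : ℝ) * (12*√3)^(m+2) * ((m+2)! : ℝ) := by
        positivity
      have h := Real.sqrt_le_sqrt hsq
      rwa [Real.sqrt_sq hAnn, Real.sqrt_sq hBnn] at h
    have hz3 : (3 : ℝ) ^ (((q+1:ℕ) : ℤ) - 2) = 3^q/3 := by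
      rw [show ((q+1:ℕ) : ℤ) - 2 = (q:ℤ) - 1 from by push_cast; ring,
        zpow_sub₀ (by norm_num : (3:ℝ) ≠ 0), zpow_natCast, zpow_one]
    have hgle : ((gprod (2*q+m+3) m : ℕ):ℝ) ≤ (3:ℝ)^q * ((gprod (m+3) m : ℕ):ℝ) := by
      have h := gprod_iter (m+3) m (by omega) q
      rw [show m+3+2*q = 2*q+m+3 from by omega] at h
      exact_mod_cast h
    have hfq : (0:ℝ) < (((q+1)! : ℕ):ℝ) := by exact_mod_cast (q+1).factorial_pos
    have hfm : (0:ℝ) < ((m+2)! : ℝ) := by exact_mod_cast (m+2).factorial_pos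
    have hdf : (0:ℝ) < (((2*q+m+3)‼ : ℕ):ℝ) := by exact_mod_cast Nat.doubleFactorial_pos _
    have hs2π : (0:ℝ) < √(2*π) := Real.sqrt_pos.mpr (by positivity)
    have hRpos : (0:ℝ) < (((m+2:ℕ)):ℝ) ^ (-(5 / 2) : ℝ) :=
      Real.rpow_pos_of_pos (by push_cast; positivity) _
    simp only [Tfun]
    rw [show 2*(q+1)+3*(m+2)-5 = (2*q+m+3)+2*m from by omega,
      show 2*(q+1)+(m+2)-1 = 2*q+m+3 from by omega,
      show m+2-1 = m+1 from by omega, dfac_add]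
    have hRHS : 100 * Cfun (q+1) * (((m+2:ℕ)):ℝ) ^ (-(5 / 2) : ℝ) * (12*√3)^(m+2)
        = (100*((3:ℝ)^q/3)*((q:ℝ)+1)*((2*(q+1))! : ℝ)*((((m+2:ℕ)):ℝ) ^ (-(5 / 2) : ℝ))*((12*√3)^(m+2)))
          / (4*√(2*π)*(((q+1)! : ℝ))^2) := by
      simp only [Cfun]
      rw [hz3]
      push_cast
      ring
    rw [hRHS, div_le_div_iff₀ (by positivity) (by positivity)]
    have hchain : ((gprod (2*q+m+3) m : ℕ):ℝ)*(4^(m+2)*√(2*π)) ≤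
        (3:ℝ)^q*((100/3) * ((((m+2:ℕ)):ℝ) ^ (-(5 / 2) : ℝ)) * ((12*√3)^(m+2)) * ((m+2)! : ℝ)) := by
      calc ((gprod (2*q+m+3) m : ℕ):ℝ)*(4^(m+2)*√(2*π))
          ≤ ((3:ℝ)^q * ((gprod (m+3) m : ℕ):ℝ))*(4^(m+2)*√(2*π)) :=
            mul_le_mul_of_nonneg_right hgle (by positivity)
        _ = (3:ℝ)^q*(4^(m+2)*√(2*π)*((gprod (m+3) m : ℕ):ℝ)) := by ring
        _ ≤ _ := mul_le_mul_of_nonneg_left G2 (by positivity)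
    calc 4^(m+1) * ((q+1:ℕ):ℝ) * ((2*(q+1))! : ℝ) * (((2*q+m+3)‼ * gprod (2*q+m+3) m : ℕ):ℝ) *
          (4*√(2*π)*(((q+1)! : ℝ))^2)
        = (((gprod (2*q+m+3) m : ℕ):ℝ)*(4^(m+2)*√(2*π))) *
          (((q:ℝ)+1)*((2*(q+1))! : ℝ)*(((2*q+m+3)‼:ℕ):ℝ)*(((q+1)! : ℝ))^2) := by
          push_cast
          ring
      _ ≤ ((3:ℝ)^q*((100/3) * ((((m+2:ℕ)):ℝ) ^ (-(5 / 2) : ℝ)) * ((12*√3)^(m+2)) * ((m+2)! : ℝ))) *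
          (((q:ℝ)+1)*((2*(q+1))! : ℝ)*(((2*q+m+3)‼:ℕ):ℝ)*(((q+1)! : ℝ))^2) :=
          mul_le_mul_of_nonneg_right hchain (by positivity)
      _ = (100*((3:ℝ)^q/3)*((q:ℝ)+1)*((2*(q+1))! : ℝ)*((((m+2:ℕ)):ℝ) ^ (-(5 / 2) : ℝ))*((12*√3)^(m+2))) *
          ((((q+1)! : ℝ))^2 * ((m+2)! : ℝ) * (((2*q+m+3)‼:ℕ):ℝ)) := by
          push_cast
          ring
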